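/- For fixed 0 ≤ a ≤ b ≤ n with b − a < n, the sequence M ↦ P_M([a,b]) is unimodal in M: there is an integer M(a,b) in [0, N] such that P_M([a,b]) is nondecreasing for M ≤ M(a,b) and nonincreasing for M ≥ M(a,b). Moreover, if a = 0 one may take M(a,b) = 0, and if b = n one may take M(a,b) = N. -/
import Mathlib


def hyperPMF (M n N x : ℕ) : ℚ :=
  if x ≤ n then (M.choose x * (N - M).choose (n - x) : ℚ) / (N.choose n) else 0

lemma cross1 (m j k : ℕ) (hjk : j ≤ k) :
    m.choose j * m.choose (k+1) ≤ m.choose (j+1) * m.choose k := by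
  have h1 := Nat.choose_succ_right_eq m j
  have h2 := Nat.choose_succ_right_eq m k
  have key : (m - k) * (j+1) ≤ (m - j) * (k+1) :=
    Nat.mul_le_mul (Nat.sub_le_sub_left hjk m) (by omega)
  have main : m.choose j * m.choose (k+1) * ((j+1)*(k+1))
      ≤ m.choose (j+1) * m.choose k * ((j+1)*(k+1)) := by
    calc m.choose j * m.choose (k+1) * ((j+1)*(k+1))
        = (m.choose (k+1) * (k+1)) * (m.choose j) * (j+1) := by ring
      _ = (m.choose k * (m-k)) * (m.choose j) * (j+1) := by rw [h2]
      _ = (m.choose k * m.choose j) * ((m-k) * (j+1)) := by ring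
      _ ≤ (m.choose k * m.choose j) * ((m-j) * (k+1)) := Nat.mul_le_mul_left _ key
      _ = (m.choose (j+1) * (j+1)) * m.choose k * (k+1) := by rw [h1]; ring
      _ = m.choose (j+1) * m.choose k * ((j+1)*(k+1)) := by ring
  exact Nat.le_of_mul_le_mul_right main (by positivity)

lemma cross2 (m j k : ℕ) (hjk : j ≤ k) :
    (m+1).choose j * m.choose k ≤ m.choose j * (m+1).choose k := by
  match j, k with
  | 0, k => simpa using Nat.choose_le_choose k (Nat.le_succ m)
  | (j'+1), (k'+1) =>
    have h := cross1 m j' k' (by omega)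
    rw [Nat.choose_succ_succ m j', Nat.choose_succ_succ m k']
    nlinarith [h]

def hS (n N a b M : ℕ) : ℕ := ∑ x ∈ Finset.Icc a b, (M.choose x) * ((N-M).choose (n-x))

lemma pt (n N M x : ℕ) (hx : 1 ≤ x) (hxn : x ≤ n - 1) (hn : 1 ≤ n) (hM : M + 1 ≤ N) :
    (M+1).choose x * ((N-M-1).choose (n-x)) + M.choose x * ((N-M-1).choose (n-x-1))
    = M.choose x * ((N-M).choose (n-x)) + M.choose (x-1) * ((N-M-1).choose (n-x)) := by
  obtain ⟨x', rfl⟩ : ∃ x', x = x'+1 := ⟨x-1, by omega⟩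
  obtain ⟨q, hq⟩ : ∃ q, n - (x'+1) = q+1 := ⟨n-(x'+1)-1, by omega⟩
  obtain ⟨P, hP⟩ : ∃ P, N - M = P+1 := ⟨N-M-1, by omega⟩
  have hP' : N - M - 1 = P := by omega
  have hq' : n - (x'+1) - 1 = q := by omega
  rw [hq', hP', hq, hP]
  simp only [Nat.add_sub_cancel]
  rw [Nat.choose_succ_succ M x', Nat.choose_succ_succ P q]
  ring

lemma pt0 (n N M : ℕ) (hn : 1 ≤ n) (hM : M + 1 ≤ N) :
    (M+1).choose 0 * ((N-M-1).choose (n-0)) + M.choose 0 * ((N-M-1).choose (n-0-1))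
    = M.choose 0 * ((N-M).choose (n-0)) := by
  obtain ⟨q, hq⟩ : ∃ q, n = q+1 := ⟨n-1, by omega⟩
  obtain ⟨P, hP⟩ : ∃ P, N - M = P+1 := ⟨N-M-1, by omega⟩
  have hP' : N - M - 1 = P := by omega
  subst hq
  rw [hP', hP]
  simp only [Nat.choose_zero_right, one_mul, Nat.sub_zero, Nat.add_sub_cancel]
  rw [Nat.choose_succ_succ P q]
  ring

lemma ptn (n N M : ℕ) (hn : 1 ≤ n) (hM : M + 1 ≤ N) :
    (M+1).choose n * ((N-M-1).choose 0)
    = M.choose n * ((N-M).choose 0) + M.choose (n-1) * ((N-M-1).choose 0) := by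
  obtain ⟨q, hq⟩ : ∃ q, n = q+1 := ⟨n-1, by omega⟩
  subst hq
  simp only [Nat.choose_zero_right, mul_one, Nat.add_sub_cancel]
  rw [Nat.choose_succ_succ M q]
  ring

lemma hS_succ (n N a c M : ℕ) (hac : a ≤ c + 1) :
    hS n N a (c+1) M = hS n N a c M + M.choose (c+1) * ((N-M).choose (n-(c+1))) := by
  unfold hS
  rw [Finset.sum_Icc_succ_top hac]

lemma tele2 (n N a M : ℕ) (hn : 1 ≤ n) (ha : 1 ≤ a) (hM : M + 1 ≤ N) :
    ∀ c, a ≤ c → c ≤ n - 1 →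
    hS n N a c (M+1) + M.choose c * ((N-M-1).choose (n-c-1))
    = hS n N a c M + M.choose (a-1) * ((N-M-1).choose (n-a)) := by
  have hNM : N - (M+1) = N - M - 1 := by omega
  intro c hac
  induction c, hac using Nat.le_induction with
  | base =>
    intro han
    unfold hS
    rw [Finset.Icc_self, Finset.sum_singleton, Finset.sum_singleton, hNM]
    exact pt n N M a ha han hn hM
  | succ c hac ih =>
    intro hc
    have ih' := ih (by omega)
    have hpt := pt n N M (c+1) (by omega) hc hn hM
    rw [hS_succ n N a c (M+1) (by omega), hS_succ n N a c M (by omega), hNM]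
    simp only [Nat.add_sub_cancel, Nat.sub_sub] at *
    linarith [ih', hpt]

lemma tele1 (n N M : ℕ) (hn : 1 ≤ n) (hM : M + 1 ≤ N) :
    ∀ c, c ≤ n - 1 →
    hS n N 0 c (M+1) + M.choose c * ((N-M-1).choose (n-c-1))
    = hS n N 0 c M := by
  have hNM : N - (M+1) = N - M - 1 := by omega
  intro c
  induction c with
  | zero =>
    intro _
    unfold hS
    rw [Finset.Icc_self, Finset.sum_singleton, Finset.sum_singleton, hNM]
    exact pt0 n N M hn hM
  | succ c ih =>
    intro hc
    have ih' := ih (by omega)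
    have hpt := pt n N M (c+1) (by omega) hc hn hM
    rw [hS_succ n N 0 c (M+1) (by omega), hS_succ n N 0 c M (by omega), hNM]
    simp only [Nat.add_sub_cancel, Nat.sub_sub] at *
    linarith [ih', hpt]

lemma tele3 (n N a M : ℕ) (hn : 1 ≤ n) (ha : 1 ≤ a) (han : a ≤ n) (hM : M + 1 ≤ N) :
    hS n N a n (M+1) = hS n N a n M + M.choose (a-1) * ((N-M-1).choose (n-a)) := by
  have hNM : N - (M+1) = N - M - 1 := by omega
  rcases eq_or_lt_of_le han with rfl | hlt
  · unfold hS
    rw [Finset.Icc_self, Finset.sum_singleton, Finset.sum_singleton, hNM]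
    have : a - a = 0 := by omega
    rw [this]
    exact ptn a N M hn hM
  · obtain ⟨n', rfl⟩ : ∃ n', n = n'+1 := ⟨n-1, by omega⟩
    have h2 := tele2 (n'+1) N a M hn ha hM n' (by omega) (by omega)
    have hptn := ptn (n'+1) N M hn hM
    rw [hS_succ (n'+1) N a n' (M+1) (by omega), hS_succ (n'+1) N a n' M (by omega), hNM]
    have e0 : n' + 1 - (n'+1) = 0 := by omega
    have e1 : n' + 1 - n' - 1 = 0 := by omega
    rw [e0]
    rw [e1] at h2
    simp only [Nat.add_sub_cancel] at hptn
    linarith [h2, hptn]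

lemma crossUV (n N a b M : ℕ) (ha : 1 ≤ a) (hab : a ≤ b) (hM : M + 2 ≤ N) :
    ((M+1).choose (a-1) * ((N-(M+1)-1).choose (n-a))) * (M.choose b * ((N-M-1).choose (n-b-1)))
    ≤ (M.choose (a-1) * ((N-M-1).choose (n-a))) * ((M+1).choose b * ((N-(M+1)-1).choose (n-b-1))) := by
  obtain ⟨Q, hQ⟩ : ∃ Q, N - M - 1 = Q + 1 := ⟨N-M-2, by omega⟩
  have hQ' : N - (M+1) - 1 = Q := by omega
  rw [hQ, hQ']
  have c1 : (M+1).choose (a-1) * M.choose b ≤ M.choose (a-1) * (M+1).choose b :=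
    cross2 M (a-1) b (by omega)
  have c2 : (Q+1).choose (n-b-1) * Q.choose (n-a) ≤ Q.choose (n-b-1) * (Q+1).choose (n-a) :=
    cross2 Q (n-b-1) (n-a) (by omega)
  calc (M+1).choose (a-1) * Q.choose (n-a) * (M.choose b * (Q+1).choose (n-b-1))
      = ((M+1).choose (a-1) * M.choose b) * ((Q+1).choose (n-b-1) * Q.choose (n-a)) := by ring
    _ ≤ (M.choose (a-1) * (M+1).choose b) * (Q.choose (n-b-1) * (Q+1).choose (n-a)) :=
        Nat.mul_le_mul c1 c2
    _ = M.choose (a-1) * (Q+1).choose (n-a) * ((M+1).choose b * Q.choose (n-b-1)) := by ring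

lemma chain_up (S : ℕ → ℕ) (hi : ℕ) (h : ∀ m, m < hi → S m ≤ S (m+1)) :
    ∀ M1 M2, M1 ≤ M2 → M2 ≤ hi → S M1 ≤ S M2 := by
  intro M1 M2 h12 h2
  induction M2, h12 using Nat.le_induction with
  | base => exact le_refl _
  | succ m hm ih => exact (ih (by omega)).trans (h m (by omega))

lemma chain_down (S : ℕ → ℕ) (lo hi : ℕ) (h : ∀ m, lo ≤ m → m < hi → S (m+1) ≤ S m) :
    ∀ M1 M2, lo ≤ M1 → M1 ≤ M2 → M2 ≤ hi → S M2 ≤ S M1 := by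
  intro M1 M2 h1 h12 h2
  induction M2, h12 using Nat.le_induction with
  | base => exact le_refl _
  | succ m hm ih => exact (h m (by omega) (by omega)).trans (ih (by omega))

lemma sum_hyperPMF_eq (n N a b M : ℕ) (hbn : b ≤ n) :
    ∑ x ∈ Finset.Icc a b, hyperPMF M n N x = (hS n N a b M : ℚ) / (N.choose n) := by
  unfold hS
  push_cast
  rw [Finset.sum_div]
  refine Finset.sum_congr rfl fun x hx => ?_
  rw [hyperPMF, if_pos (le_trans (Finset.mem_Icc.mp hx).2 hbn)]

lemma sum_hyperPMF_le (n N a b M1 M2 : ℕ) (hn : 0 < n) (hnN : n ≤ N) (hbn : b ≤ n)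
    (h : hS n N a b M1 ≤ hS n N a b M2) :
    ∑ x ∈ Finset.Icc a b, hyperPMF M1 n N x ≤ ∑ x ∈ Finset.Icc a b, hyperPMF M2 n N x := by
  rw [sum_hyperPMF_eq n N a b M1 hbn, sum_hyperPMF_eq n N a b M2 hbn]
  have hc : (0:ℚ) < N.choose n := by exact_mod_cast Nat.choose_pos hnN
  have h' : (hS n N a b M1 : ℚ) ≤ hS n N a b M2 := by exact_mod_cast h
  exact div_le_div_of_nonneg_right h' hc.le

def hu (n N a M : ℕ) : ℕ := M.choose (a-1) * ((N-M-1).choose (n-a))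
def hv (n N b M : ℕ) : ℕ := M.choose b * ((N-M-1).choose (n-b-1))

/-- Unimodality of M ↦ P_M([a,b]): there is M(a,b) ∈ [0,N] such that the interval
probability is nondecreasing up to M(a,b) and nonincreasing after it; one may take
M(a,b) = 0 when a = 0 and M(a,b) = N when b = n. -/
theorem hyperPMF_interval_unimodal_in_M (n N a b : ℕ) (hn : 0 < n) (hnN : n ≤ N)
    (hab : a ≤ b) (hbn : b ≤ n) (hlen : b - a < n) :
    ∃ Mab : ℕ, Mab ≤ N ∧
      (∀ M1 M2 : ℕ, M1 ≤ M2 → M2 ≤ Mab →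
        (∑ x ∈ Finset.Icc a b, hyperPMF M1 n N x)
          ≤ ∑ x ∈ Finset.Icc a b, hyperPMF M2 n N x) ∧
      (∀ M1 M2 : ℕ, Mab ≤ M1 → M1 ≤ M2 → M2 ≤ N →
        (∑ x ∈ Finset.Icc a b, hyperPMF M2 n N x)
          ≤ ∑ x ∈ Finset.Icc a b, hyperPMF M1 n N x) ∧
      (a = 0 → Mab = 0) ∧ (b = n → Mab = N) := by
  by_cases ha0 : a = 0
  · -- a = 0 : nonincreasing everywhere, Mab = 0
    subst ha0
    have hbn1 : b ≤ n - 1 := by omega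
    refine ⟨0, Nat.zero_le N, ?_, ?_, fun _ => rfl, fun h => absurd h (by omega)⟩
    · intro M1 M2 h12 h2
      have e1 : M1 = 0 := by omega
      have e2 : M2 = 0 := by omega
      rw [e1, e2]
    · intro M1 M2 _ h12 h2
      apply sum_hyperPMF_le n N 0 b M2 M1 hn hnN hbn
      refine chain_down (hS n N 0 b) 0 N ?_ M1 M2 (Nat.zero_le _) h12 h2
      intro m _ hmN
      exact Nat.le.intro (tele1 n N m hn (by omega) b hbn1)
  · have ha : 1 ≤ a := by omega
    by_cases hbn' : b = n
    · -- b = n : nondecreasing everywhere, Mab = N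
      subst hbn'
      refine ⟨N, le_refl N, ?_, ?_, fun h => absurd h ha0, fun _ => rfl⟩
      · intro M1 M2 h12 h2
        apply sum_hyperPMF_le b N a b M1 M2 hn hnN hbn
        refine chain_up (hS b N a b) N ?_ M1 M2 h12 h2
        intro m hmN
        exact Nat.le.intro (tele3 b N a m hn ha hab (by omega)).symm
      · intro M1 M2 h1 h12 h2
        have : M1 = M2 := le_antisymm h12 (by omega)
        rw [this]
    · have hbn1 : b ≤ n - 1 := by omega
      have hstep : ∀ m, m < N →
          hS n N a b (m+1) + hv n N b m = hS n N a b m + hu n N a m := by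
        intro m hm
        exact tele2 n N a m hn ha (by omega) b hab hbn1
      by_cases hex : ∃ M, M < N ∧ hu n N a M < hv n N b M
      · -- threshold Mab = least M with u < v
        obtain ⟨hMabN, hMabuv⟩ := Nat.find_spec hex
        refine ⟨Nat.find hex, by omega, ?_, ?_,
          fun h => absurd h ha0, fun h => absurd h hbn'⟩
        · intro M1 M2 h12 h2
          apply sum_hyperPMF_le n N a b M1 M2 hn hnN hbn
          refine chain_up (hS n N a b) (Nat.find hex) ?_ M1 M2 h12 h2
          intro m hm
          have hmN : m < N := lt_trans hm hMabN
          have hnot := Nat.find_min hex hm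
          have huv : hv n N b m ≤ hu n N a m := by
            by_contra hcon
            exact hnot ⟨hmN, by omega⟩
          have h1 : hS n N a b m + hv n N b m ≤ hS n N a b (m+1) + hv n N b m := by
            rw [hstep m hmN]
            exact Nat.add_le_add_left huv _
          exact Nat.le_of_add_le_add_right h1
        · intro M1 M2 h1 h12 h2
          apply sum_hyperPMF_le n N a b M2 M1 hn hnN hbn
          refine chain_down (hS n N a b) (Nat.find hex) N ?_ M1 M2 h1 h12 h2
          have hJ : ∀ m, Nat.find hex ≤ m → m < N →
              (hu n N a m < hv n N b m ∨ N - m - 1 < n - a) := by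
            intro m hm
            induction m, hm using Nat.le_induction with
            | base => intro _; exact Or.inl hMabuv
            | succ m hm ih =>
              intro hm1N
              have hmN : m < N := by omega
              rcases ih hmN with hlt | htail
              · by_cases hv1 : hv n N b (m+1) = 0
                · right
                  have hvm : 0 < hv n N b m := lt_of_le_of_lt (Nat.zero_le _) hlt
                  have hb2 : 0 < (m+1).choose b := by
                    apply Nat.choose_pos
                    by_contra hc
                    have : m.choose b = 0 := Nat.choose_eq_zero_of_lt (by omega)
                    rw [hv, this, zero_mul] at hvm
                    exact absurd hvm (lt_irrefl 0)
                  have hE2 : ((N-(m+1)-1).choose (n-b-1)) = 0 := by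
                    rw [hv] at hv1
                    rcases Nat.mul_eq_zero.mp hv1 with h | h
                    · omega
                    · exact h
                  have : N - (m+1) - 1 < n - b - 1 := by
                    by_contra hc
                    exact absurd hE2 (Nat.choose_pos (show n-b-1 ≤ N-(m+1)-1 by omega)).ne'
                  omega
                · left
                  have hcross := crossUV n N a b m ha hab (by omega)
                  have hcross' : hu n N a (m+1) * hv n N b m
                      ≤ hu n N a m * hv n N b (m+1) := hcross
                  have hkey : hu n N a (m+1) * hv n N b m
                      < hv n N b (m+1) * hv n N b m := by
                    calc hu n N a (m+1) * hv n N b m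
                        ≤ hu n N a m * hv n N b (m+1) := hcross'
                      _ < hv n N b m * hv n N b (m+1) :=
                          (Nat.mul_lt_mul_right (Nat.pos_of_ne_zero hv1)).mpr hlt
                      _ = hv n N b (m+1) * hv n N b m := by ring
                  exact Nat.lt_of_mul_lt_mul_right hkey
              · right; omega
          intro m hm hmN
          have hj := hJ m hm hmN
          have huv : hu n N a m ≤ hv n N b m := by
            rcases hj with h | h
            · exact le_of_lt h
            · have : ((N-m-1).choose (n-a)) = 0 := Nat.choose_eq_zero_of_lt h
              rw [hu, this, mul_zero]
              exact Nat.zero_le _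
          have h1 : hS n N a b (m+1) + hv n N b m ≤ hS n N a b m + hv n N b m := by
            rw [hstep m hmN]
            exact Nat.add_le_add_left huv _
          exact Nat.le_of_add_le_add_right h1
      · -- never decreases: Mab = N
        push_neg at hex
        refine ⟨N, le_refl N, ?_, ?_, fun h => absurd h ha0, fun h => absurd h hbn'⟩
        · intro M1 M2 h12 h2
          apply sum_hyperPMF_le n N a b M1 M2 hn hnN hbn
          refine chain_up (hS n N a b) N ?_ M1 M2 h12 h2
          intro m hmN
          have huv : hv n N b m ≤ hu n N a m := hex m hmN
          have h1 : hS n N a b m + hv n N b m ≤ hS n N a b (m+1) + hv n N b m := by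
            rw [hstep m hmN]
            exact Nat.add_le_add_left huv _
          exact Nat.le_of_add_le_add_right h1
        · intro M1 M2 h1 h12 h2
          have : M1 = M2 := le_antisymm h12 (by omega)
          rw [this]
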